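/- Let N ≥ 1 and T ≥ 2 be integers, θ ∈ (0,1), t₀ = ⌊Tθ⌋, and consider panel data Y_{i,t} = μ_i + δ_i·1(t > t₀) + e_{i,t}, i = 1,…,N, t = 1,…,T, where μ_i, δ_i are real constants and, for each i, e_{i,1},…,e_{i,T} are independent, square-integrable, with mean 0 and variance σ_i². Let w_1,…,w_{T−1} be nonnegative weights, not all zero. Then the weighted least squares estimator satisfies exactly E[ σ̂²_{N,T}(w) ] = N^{−1} Σ_{i=1}^N σ_i² + h_T(θ; w) · (T/N) · Σ_{i=1}^N δ_i², where h_T(θ; w) = ( Σ_{k=1}^{T−1} m_T(k/T)² w_k )^{−1} · Σ_{k=1}^{T−1} g(⌊Tθ⌋/T, k/T)² · m_T(k/T) w_k. In particular, since h_T(θ;w) ≥ 0, the estimator is biased upwards in the presence of a change. -/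

import Mathlib

open MeasureTheory ProbabilityTheory

/-- `m(s) = s(1-s)`. Note that `m_T(k/T) = m(k/T)` for integers `1 ≤ k ≤ T-1`. -/
noncomputable def m (s : ℝ) : ℝ := s * (1 - s)

/-- `g(s,t) = min(s,t)·(1 - max(s,t))`. -/
noncomputable def g (s t : ℝ) : ℝ := min s t * (1 - max s t)

/-- CUSUM process of the data `Y 1, …, Y T`:
`Z(s) = T^{-1/2} ∑_{k=1}^{⌊Ts⌋} (Y k - Ȳ_T)`. -/
noncomputable def cusum (T : ℕ) (Y : ℕ → ℝ) (s : ℝ) : ℝ :=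
  (Real.sqrt T)⁻¹ * ∑ k ∈ Finset.Icc 1 (⌊(T : ℝ) * s⌋.toNat),
    (Y k - (T : ℝ)⁻¹ * ∑ t ∈ Finset.Icc 1 T, Y t)

lemma l2_mul_integrable {Ω : Type*} [MeasurableSpace Ω] {P : Measure Ω}
    {f h : Ω → ℝ} (hf : MemLp f 2 P) (hh : MemLp h 2 P) :
    Integrable (fun ω => f ω * h ω) P := by
  have := hh.smul (φ := f) hf (r := 1)
  rw [memLp_one_iff_integrable] at this
  exact this

lemma sum_sq_indep {Ω : Type*} [MeasurableSpace Ω] (P : Measure Ω) [IsProbabilityMeasure P]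
    (T : ℕ) (e : ℕ → Ω → ℝ)
    (hindep : iIndepFun (fun k : (Finset.Icc 1 T) => e (k : ℕ)) P)
    (hL2 : ∀ t ∈ Finset.Icc 1 T, MemLp (e t) 2 P)
    (hmean : ∀ t ∈ Finset.Icc 1 T, ∫ ω, e t ω ∂P = 0)
    (σ2 : ℝ) (hvar : ∀ t ∈ Finset.Icc 1 T, ∫ ω, (e t ω) ^ 2 ∂P = σ2)
    (c : ℕ → ℝ) :
    ∫ ω, (∑ t ∈ Finset.Icc 1 T, c t * e t ω) ^ 2 ∂P
      = σ2 * ∑ t ∈ Finset.Icc 1 T, (c t) ^ 2 := by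
  have hint : ∀ t ∈ Finset.Icc 1 T, ∀ s ∈ Finset.Icc 1 T,
      Integrable (fun ω => (c t * e t ω) * (c s * e s ω)) P := by
    intro t ht s hs
    have : Integrable (fun ω => e t ω * e s ω) P :=
      l2_mul_integrable (hL2 t ht) (hL2 s hs)
    exact (this.const_mul (c t * c s)).congr
      (Filter.Eventually.of_forall fun ω => by ring)
  have expand : ∀ ω : Ω, (∑ t ∈ Finset.Icc 1 T, c t * e t ω) ^ 2
      = ∑ t ∈ Finset.Icc 1 T, ∑ s ∈ Finset.Icc 1 T, (c t * e t ω) * (c s * e s ω) := by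
    intro ω
    rw [sq, Finset.sum_mul_sum]
  simp only [expand]
  rw [integral_finset_sum _ (fun t ht => integrable_finset_sum _ (fun s hs => hint t ht s hs))]
  have inner : ∀ t ∈ Finset.Icc 1 T,
      (∫ ω, ∑ s ∈ Finset.Icc 1 T, (c t * e t ω) * (c s * e s ω) ∂P) = σ2 * (c t) ^ 2 := by
    intro t ht
    rw [integral_finset_sum _ (fun s hs => hint t ht s hs)]
    rw [Finset.sum_eq_single_of_mem t ht]
    · have : (∫ ω, (c t * e t ω) * (c t * e t ω) ∂P)
          = (c t * c t) * ∫ ω, (e t ω) ^ 2 ∂P := by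
        rw [← integral_const_mul]
        congr 1; funext ω; ring
      rw [this, hvar t ht]; ring
    · intro s hs hst
      have hne : (⟨t, ht⟩ : (Finset.Icc 1 T)) ≠ ⟨s, hs⟩ := by
        simp only [ne_eq, Subtype.mk.injEq]
        exact fun h => hst h.symm
      have hind : IndepFun (e t) (e s) P := hindep.indepFun hne
      have : (∫ ω, (c t * e t ω) * (c s * e s ω) ∂P)
          = (c t * c s) * ∫ ω, e t ω * e s ω ∂P := by
        rw [← integral_const_mul]
        congr 1; funext ω; ring
      rw [this, show (∫ ω, e t ω * e s ω ∂P) = ∫ ω, (e t * e s) ω ∂P from rfl,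
        hind.integral_mul_eq_mul_integral (hL2 t ht).aestronglyMeasurable (hL2 s hs).aestronglyMeasurable,
        hmean t ht, hmean s hs]
      ring
  rw [Finset.sum_congr rfl inner, ← Finset.mul_sum]

lemma sum_ite_gt (f : ℕ → ℝ) (a b : ℕ) :
    ∑ t ∈ Finset.Icc 1 b, (if a < t then f t else 0) = ∑ t ∈ Finset.Icc (a+1) b, f t := by
  rw [← Finset.sum_filter]
  congr 1
  ext t
  simp only [Finset.mem_filter, Finset.mem_Icc]
  omega

lemma sum_ite_le (f : ℕ → ℝ) {k b : ℕ} (h : k ≤ b) :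
    ∑ t ∈ Finset.Icc 1 b, (if t ≤ k then f t else 0) = ∑ t ∈ Finset.Icc 1 k, f t := by
  rw [← Finset.sum_filter]
  congr 1
  ext t
  simp only [Finset.mem_filter, Finset.mem_Icc]
  omega

set_option maxHeartbeats 1000000 in
theorem stmt16 {Ω : Type*} [MeasurableSpace Ω] (P : Measure Ω) [IsProbabilityMeasure P]
    (N T : ℕ) (hN : 1 ≤ N) (hT : 2 ≤ T)
    (θ : ℝ) (hθ : θ ∈ Set.Ioo (0 : ℝ) 1) (t₀ : ℕ) (ht₀ : (t₀ : ℤ) = ⌊(T : ℝ) * θ⌋)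
    (μ δ : ℕ → ℝ) (σ2 : ℕ → ℝ) (e : ℕ → ℕ → Ω → ℝ)
    (hmeas : ∀ i t, Measurable (e i t))
    (hindep : ∀ i ∈ Finset.Icc 1 N,
      iIndepFun (fun k : (Finset.Icc 1 T) => e i (k : ℕ)) P)
    (hL2 : ∀ i ∈ Finset.Icc 1 N, ∀ t ∈ Finset.Icc 1 T, MemLp (e i t) 2 P)
    (hmean : ∀ i ∈ Finset.Icc 1 N, ∀ t ∈ Finset.Icc 1 T, ∫ ω, e i t ω ∂P = 0)
    (hvar : ∀ i ∈ Finset.Icc 1 N, ∀ t ∈ Finset.Icc 1 T, ∫ ω, (e i t ω) ^ 2 ∂P = σ2 i)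
    (Y : ℕ → ℕ → Ω → ℝ)
    (hY : ∀ i t ω, Y i t ω = μ i + δ i * (if t₀ < t then 1 else 0) + e i t ω)
    (w : ℕ → ℝ) (hw : ∀ k ∈ Finset.Icc 1 (T - 1), 0 ≤ w k)
    (hw0 : ∃ k ∈ Finset.Icc 1 (T - 1), w k ≠ 0)
    (σhat : Ω → ℝ)
    (hσhat : ∀ ω, σhat ω = (∑ k ∈ Finset.Icc 1 (T - 1), (m ((k : ℝ) / T)) ^ 2 * w k)⁻¹ *
      ∑ k ∈ Finset.Icc 1 (T - 1), m ((k : ℝ) / T) * w k *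
        ((N : ℝ)⁻¹ * ∑ i ∈ Finset.Icc 1 N,
          (cusum T (fun t => Y i t ω) ((k : ℝ) / T)) ^ 2))
    (hTθ : ℝ)
    (hhTθ : hTθ = (∑ k ∈ Finset.Icc 1 (T - 1), (m ((k : ℝ) / T)) ^ 2 * w k)⁻¹ *
      ∑ k ∈ Finset.Icc 1 (T - 1),
        (g ((t₀ : ℝ) / T) ((k : ℝ) / T)) ^ 2 * m ((k : ℝ) / T) * w k) :
    ∫ ω, σhat ω ∂P
        = (N : ℝ)⁻¹ * ∑ i ∈ Finset.Icc 1 N, σ2 i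
          + hTθ * ((T : ℝ) / N) * ∑ i ∈ Finset.Icc 1 N, (δ i) ^ 2
      ∧ (N : ℝ)⁻¹ * ∑ i ∈ Finset.Icc 1 N, σ2 i ≤ ∫ ω, σhat ω ∂P := by
  obtain ⟨hθ0, hθ1⟩ := hθ
  have hT0 : (0:ℝ) < T := by
    have : 0 < T := by omega
    exact_mod_cast this
  have hTne : (T:ℝ) ≠ 0 := ne_of_gt hT0
  have hsq : Real.sqrt T * Real.sqrt T = (T:ℝ) := Real.mul_self_sqrt hT0.le
  have hsne : Real.sqrt T ≠ 0 := by positivity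
  have hinv : (Real.sqrt T)⁻¹ = Real.sqrt T / T := by
    rw [eq_div_iff hTne, ← hsq]
    rw [Real.sqrt_mul_self (Real.sqrt_nonneg _)]
    field_simp
  have ht₀T : t₀ < T := by
    have h1 : (t₀:ℝ) ≤ (T:ℝ) * θ := by
      have h := Int.floor_le ((T:ℝ) * θ)
      rw [← ht₀] at h
      exact_mod_cast h
    have h2 : (T:ℝ) * θ < T := by nlinarith
    exact_mod_cast h1.trans_lt h2
  have hc₂ : ((T - t₀ : ℕ) : ℝ) = (T:ℝ) - t₀ := by
    rw [Nat.cast_sub ht₀T.le]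
  -- the key deterministic identity
  have key : ∀ k ∈ Finset.Icc 1 (T-1), ((k - t₀ : ℕ) : ℝ)
      = (k:ℝ) * ((T - t₀ : ℕ) : ℝ) / T - (T:ℝ) * g ((t₀:ℝ)/T) ((k:ℝ)/T) := by
    intro k hk
    rw [hc₂]
    rcases le_or_gt k t₀ with h | h
    · have h0 : k - t₀ = 0 := Nat.sub_eq_zero_of_le h
      have hkr : (k:ℝ) ≤ (t₀:ℝ) := by exact_mod_cast h
      have hmin : min ((t₀:ℝ)/T) ((k:ℝ)/T) = (k:ℝ)/T :=
        min_eq_right (by gcongr)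
      have hmax : max ((t₀:ℝ)/T) ((k:ℝ)/T) = (t₀:ℝ)/T :=
        max_eq_left (by gcongr)
      rw [h0]
      simp only [g, hmin, hmax, Nat.cast_zero]
      field_simp
      ring
    · have h1 : ((k - t₀ : ℕ) : ℝ) = (k:ℝ) - t₀ := by rw [Nat.cast_sub h.le]
      have hkr : (t₀:ℝ) ≤ (k:ℝ) := by exact_mod_cast h.le
      have hmin : min ((t₀:ℝ)/T) ((k:ℝ)/T) = (t₀:ℝ)/T :=
        min_eq_left (by gcongr)
      have hmax : max ((t₀:ℝ)/T) ((k:ℝ)/T) = (k:ℝ)/T :=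
        max_eq_right (by gcongr)
      rw [h1]
      simp only [g, hmin, hmax]
      field_simp
      ring
  -- coefficients
  set c : ℕ → ℕ → ℝ :=
    fun k t => (Real.sqrt T)⁻¹ * ((if t ≤ k then (1:ℝ) else 0) - (k:ℝ)/T) with hc
  -- representation of the CUSUM statistic
  have hrep : ∀ i, ∀ k ∈ Finset.Icc 1 (T-1), ∀ ω,
      cusum T (fun t => Y i t ω) ((k:ℝ)/T)
        = -(Real.sqrt T) * δ i * g ((t₀:ℝ)/T) ((k:ℝ)/T)
          + ∑ t ∈ Finset.Icc 1 T, c k t * e i t ω := by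
    intro i k hk ω
    simp only [Finset.mem_Icc] at hk
    have hkT : k ≤ T := by omega
    have hfloor : (⌊(T:ℝ) * ((k:ℝ)/T)⌋).toNat = k := by
      have : (T:ℝ) * ((k:ℝ)/T) = (k:ℝ) := by field_simp
      rw [this, Int.floor_natCast, Int.toNat_natCast]
    rw [cusum, hfloor]
    have htot : ∑ t ∈ Finset.Icc 1 T, Y i t ω
        = (T:ℝ) * μ i + δ i * ((T - t₀ : ℕ) : ℝ) + ∑ t ∈ Finset.Icc 1 T, e i t ω := by
      simp only [hY]
      rw [Finset.sum_add_distrib, Finset.sum_add_distrib]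
      congr 1
      congr 1
      · rw [Finset.sum_const, Nat.card_Icc, nsmul_eq_mul]
        norm_num
      · simp only [mul_ite, mul_one, mul_zero]
        rw [sum_ite_gt (fun _ => δ i) t₀ T, Finset.sum_const, Nat.card_Icc, nsmul_eq_mul]
        have : T + 1 - (t₀ + 1) = T - t₀ := by omega
        rw [this, mul_comm]
    have hpart : ∑ j ∈ Finset.Icc 1 k, Y i j ω
        = (k:ℝ) * μ i + δ i * ((k - t₀ : ℕ) : ℝ) + ∑ j ∈ Finset.Icc 1 k, e i j ω := by
      simp only [hY]
      rw [Finset.sum_add_distrib, Finset.sum_add_distrib]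
      congr 1
      congr 1
      · rw [Finset.sum_const, Nat.card_Icc, nsmul_eq_mul]
        norm_num
      · simp only [mul_ite, mul_one, mul_zero]
        rw [sum_ite_gt (fun _ => δ i) t₀ k, Finset.sum_const, Nat.card_Icc, nsmul_eq_mul]
        have : k + 1 - (t₀ + 1) = k - t₀ := by omega
        rw [this, mul_comm]
    have hek : ∑ t ∈ Finset.Icc 1 T, (if t ≤ k then (1:ℝ) else 0) * e i t ω
        = ∑ j ∈ Finset.Icc 1 k, e i j ω := by
      have : ∀ t, (if t ≤ k then (1:ℝ) else 0) * e i t ω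
          = (if t ≤ k then e i t ω else 0) := by
        intro t; split <;> simp
      simp only [this]
      exact sum_ite_le (fun t => e i t ω) hkT
    have hsum : ∑ j ∈ Finset.Icc 1 k,
        (Y i j ω - (T:ℝ)⁻¹ * ∑ t ∈ Finset.Icc 1 T, Y i t ω)
        = (∑ j ∈ Finset.Icc 1 k, Y i j ω)
          - (k:ℝ) * ((T:ℝ)⁻¹ * ∑ t ∈ Finset.Icc 1 T, Y i t ω) := by
      rw [Finset.sum_sub_distrib, Finset.sum_const, Nat.card_Icc, nsmul_eq_mul]
      norm_num
    rw [hsum, hpart, htot]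
    have hcsum : ∑ t ∈ Finset.Icc 1 T, c k t * e i t ω
        = (Real.sqrt T)⁻¹ * ((∑ j ∈ Finset.Icc 1 k, e i j ω)
            - ((k:ℝ)/T) * ∑ t ∈ Finset.Icc 1 T, e i t ω) := by
      simp only [hc]
      rw [mul_sub, ← hek, Finset.mul_sum, Finset.mul_sum, Finset.mul_sum,
        ← Finset.sum_sub_distrib]
      apply Finset.sum_congr rfl
      intro t _
      ring
    rw [hcsum, key k (by simp only [Finset.mem_Icc]; omega), hc₂, hinv]
    field_simp
    ring
  -- second moment of each CUSUM value
  have hm_eq : ∀ k ∈ Finset.Icc 1 (T-1),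
      ∑ t ∈ Finset.Icc 1 T, (c k t)^2 = m ((k:ℝ)/T) := by
    intro k hk
    simp only [Finset.mem_Icc] at hk
    have hkT : k ≤ T := by omega
    have hsq' : ∀ t, (c k t)^2 = (T:ℝ)⁻¹ *
        ((if t ≤ k then ((1 - (k:ℝ)/T)^2 - ((k:ℝ)/T)^2) else 0) + ((k:ℝ)/T)^2) := by
      intro t
      simp only [hc]
      have h2 : ((Real.sqrt T)⁻¹)^2 = (T:ℝ)⁻¹ := by
        rw [← Real.sqrt_inv]
        exact Real.sq_sqrt (by positivity)
      rw [mul_pow, h2]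
      split <;> ring
    simp only [hsq']
    rw [← Finset.mul_sum, Finset.sum_add_distrib, Finset.sum_const, Nat.card_Icc,
      nsmul_eq_mul]
    rw [sum_ite_le (fun _ => ((1 - (k:ℝ)/T)^2 - ((k:ℝ)/T)^2)) hkT, Finset.sum_const,
      Nat.card_Icc, nsmul_eq_mul]
    have h1 : ((k + 1 - 1 : ℕ) : ℝ) = (k:ℝ) := by norm_num
    have h2 : ((T + 1 - 1 : ℕ) : ℝ) = (T:ℝ) := by norm_num
    rw [h1, h2, m]
    field_simp
    ring
  have hmom : ∀ i ∈ Finset.Icc 1 N, ∀ k ∈ Finset.Icc 1 (T-1),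
      ∫ ω, (cusum T (fun t => Y i t ω) ((k:ℝ)/T))^2 ∂P
        = σ2 i * m ((k:ℝ)/T) + (T:ℝ) * (δ i)^2 * (g ((t₀:ℝ)/T) ((k:ℝ)/T))^2 := by
    intro i hi k hk
    set b : ℝ := -(Real.sqrt T) * δ i * g ((t₀:ℝ)/T) ((k:ℝ)/T) with hb
    have hrw : (fun ω => (cusum T (fun t => Y i t ω) ((k:ℝ)/T))^2)
        = fun ω => b^2 + (2*b) * (∑ t ∈ Finset.Icc 1 T, c k t * e i t ω)
            + (∑ t ∈ Finset.Icc 1 T, c k t * e i t ω)^2 := by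
      funext ω
      rw [hrep i k hk ω, ← hb]
      ring
    rw [hrw]
    have hXint : Integrable (fun ω => ∑ t ∈ Finset.Icc 1 T, c k t * e i t ω) P :=
      integrable_finset_sum _ fun t ht =>
        ((hL2 i hi t ht).integrable one_le_two).const_mul (c k t)
    have hXL2 : MemLp (fun ω => ∑ t ∈ Finset.Icc 1 T, c k t * e i t ω) 2 P :=
      memLp_finset_sum _ fun t ht => (hL2 i hi t ht).const_mul (c k t)
    have hX2int : Integrable (fun ω => (∑ t ∈ Finset.Icc 1 T, c k t * e i t ω)^2) P :=
      hXL2.integrable_sq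
    have h12 : Integrable (fun ω => b^2
        + (2*b) * (∑ t ∈ Finset.Icc 1 T, c k t * e i t ω)) P :=
      (integrable_const _).add (hXint.const_mul (2*b))
    rw [integral_add h12 hX2int,
      integral_add (integrable_const _) (hXint.const_mul (2*b)),
      integral_const, integral_const_mul]
    have hXmean : ∫ ω, ∑ t ∈ Finset.Icc 1 T, c k t * e i t ω ∂P = 0 := by
      rw [integral_finset_sum _ (fun t ht =>
        ((hL2 i hi t ht).integrable one_le_two).const_mul (c k t))]
      apply Finset.sum_eq_zero
      intro t ht
      rw [integral_const_mul, hmean i hi t ht, mul_zero]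
    have hXsq : ∫ ω, (∑ t ∈ Finset.Icc 1 T, c k t * e i t ω)^2 ∂P
        = σ2 i * ∑ t ∈ Finset.Icc 1 T, (c k t)^2 :=
      sum_sq_indep P T (e i) (hindep i hi) (hL2 i hi) (hmean i hi) (σ2 i) (hvar i hi) (c k)
    rw [hXmean, hXsq, hm_eq k hk]
    have hb2 : b^2 = (T:ℝ) * (δ i)^2 * (g ((t₀:ℝ)/T) ((k:ℝ)/T))^2 := by
      rw [hb]
      have : Real.sqrt T ^ 2 = (T:ℝ) := Real.sq_sqrt hT0.le
      nlinarith [this]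
    rw [hb2]
    simp [measure_univ]
    ring
  -- integrability of squared CUSUM values
  have hZsq_int : ∀ i ∈ Finset.Icc 1 N, ∀ k ∈ Finset.Icc 1 (T-1),
      Integrable (fun ω => (cusum T (fun t => Y i t ω) ((k:ℝ)/T))^2) P := by
    intro i hi k hk
    have hZL2 : MemLp (fun ω => cusum T (fun t => Y i t ω) ((k:ℝ)/T)) 2 P := by
      have heq : (fun ω => cusum T (fun t => Y i t ω) ((k:ℝ)/T))
          = fun ω => (-(Real.sqrt T) * δ i * g ((t₀:ℝ)/T) ((k:ℝ)/T))
              + ∑ t ∈ Finset.Icc 1 T, c k t * e i t ω := funext (hrep i k hk)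
      rw [heq]
      exact MemLp.add (f := fun _ => -(Real.sqrt T) * δ i * g ((t₀:ℝ)/T) ((k:ℝ)/T))
        (g := fun ω => ∑ t ∈ Finset.Icc 1 T, c k t * e i t ω) (memLp_const _)
        (memLp_finset_sum _ fun t ht => (hL2 i hi t ht).const_mul (c k t))
    exact hZL2.integrable_sq
  -- positivity facts
  have hm_pos : ∀ k ∈ Finset.Icc 1 (T-1), 0 < m ((k:ℝ)/T) := by
    intro k hk
    simp only [Finset.mem_Icc] at hk
    have h1 : (0:ℝ) < (k:ℝ) := by exact_mod_cast (by omega : 0 < k)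
    have h2 : (k:ℝ) < (T:ℝ) := by exact_mod_cast (by omega : k < T)
    rw [m]
    have : (k:ℝ)/T < 1 := (div_lt_one hT0).mpr h2
    have : 0 < (k:ℝ)/T := by positivity
    nlinarith
  set C : ℝ := ∑ k ∈ Finset.Icc 1 (T-1), (m ((k:ℝ)/T))^2 * w k with hC
  have hCpos : 0 < C := by
    obtain ⟨k₀, hk₀, hwk₀⟩ := hw0
    apply Finset.sum_pos'
    · intro k hk
      exact mul_nonneg (sq_nonneg _) (hw k hk)
    · exact ⟨k₀, hk₀, mul_pos (pow_pos (hm_pos k₀ hk₀) 2)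
        ((hw k₀ hk₀).lt_of_ne (Ne.symm hwk₀))⟩
  have hCne : C ≠ 0 := ne_of_gt hCpos
  set G : ℝ := ∑ k ∈ Finset.Icc 1 (T-1),
      (g ((t₀:ℝ)/T) ((k:ℝ)/T))^2 * m ((k:ℝ)/T) * w k with hG
  have hGnn : 0 ≤ G := by
    apply Finset.sum_nonneg
    intro k hk
    exact mul_nonneg (mul_nonneg (sq_nonneg _) (hm_pos k hk).le) (hw k hk)
  have hhnn : 0 ≤ hTθ := by
    rw [hhTθ]
    exact mul_nonneg (inv_nonneg.mpr hCpos.le) hGnn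
  -- the expectation computation
  have hmain : ∫ ω, σhat ω ∂P
      = (N : ℝ)⁻¹ * ∑ i ∈ Finset.Icc 1 N, σ2 i
        + hTθ * ((T : ℝ) / N) * ∑ i ∈ Finset.Icc 1 N, (δ i) ^ 2 := by
    simp only [hσhat]
    rw [integral_const_mul]
    rw [integral_finset_sum _ (fun k hk =>
      ((integrable_finset_sum _ fun i hi => hZsq_int i hi k hk).const_mul
        ((N:ℝ)⁻¹)).const_mul (m ((k:ℝ)/T) * w k))]
    have hterm : ∀ k ∈ Finset.Icc 1 (T-1),
        ∫ ω, m ((k:ℝ)/T) * w k * ((N:ℝ)⁻¹ * ∑ i ∈ Finset.Icc 1 N,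
          (cusum T (fun t => Y i t ω) ((k:ℝ)/T))^2) ∂P
        = ((N:ℝ)⁻¹ * ∑ i ∈ Finset.Icc 1 N, σ2 i) * ((m ((k:ℝ)/T))^2 * w k)
          + ((T:ℝ) * (N:ℝ)⁻¹ * ∑ i ∈ Finset.Icc 1 N, (δ i)^2)
            * ((g ((t₀:ℝ)/T) ((k:ℝ)/T))^2 * m ((k:ℝ)/T) * w k) := by
      intro k hk
      rw [integral_const_mul, integral_const_mul,
        integral_finset_sum _ (fun i hi => hZsq_int i hi k hk)]
      rw [Finset.sum_congr rfl (fun i hi => hmom i hi k hk)]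
      rw [Finset.sum_add_distrib, ← Finset.sum_mul]
      have : ∑ i ∈ Finset.Icc 1 N, (T:ℝ) * (δ i)^2 * (g ((t₀:ℝ)/T) ((k:ℝ)/T))^2
          = (T:ℝ) * (∑ i ∈ Finset.Icc 1 N, (δ i)^2) * (g ((t₀:ℝ)/T) ((k:ℝ)/T))^2 := by
        rw [← Finset.sum_mul, ← Finset.mul_sum]
      rw [this]
      ring
    rw [Finset.sum_congr rfl hterm, Finset.sum_add_distrib, ← Finset.mul_sum, ← Finset.mul_sum,
      hhTθ]
    linear_combination ((N:ℝ)⁻¹ * ∑ i ∈ Finset.Icc 1 N, σ2 i) * inv_mul_cancel₀ hCne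
  refine ⟨hmain, ?_⟩
  rw [hmain]
  have : 0 ≤ hTθ * ((T : ℝ) / N) * ∑ i ∈ Finset.Icc 1 N, (δ i) ^ 2 := by
    apply mul_nonneg (mul_nonneg hhnn (by positivity))
    exact Finset.sum_nonneg fun i _ => sq_nonneg _
  linarith
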